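/- Let x be a random variable taking values in a finite set X with probability mass function p_d, and let V be a finite set. Suppose the encoder q(z | x) (a conditional probability mass function on V^K given x) and decoder {p_i}_{i=1}^K (conditional probability mass functions p_i(x | z_{≤i}) on X) jointly minimize L(q, {p_i}) = (1/K) Σ_{i=1}^K E_{x ~ p_d, z ~ q(·|x)}[−log p_i(x | z_{≤i})] over all encoder/decoder pairs, and that under the induced joint law, z_{i−1} and z_i are conditionally independent given (x, z_{≤i−2}) for every i ∈ {3, …, K}. Then the sequence a_i = I(x; z_{≤i}) has non-increasing increments: a_i − a_{i−1} ≤ a_{i−1} − a_{i−2} for every i ∈ {3, …, K}. -/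

import Mathlib

open Finset

/-- A probability mass function on a finite type. -/
def IsPMF {Ω : Type*} [Fintype Ω] (μ : Ω → ℝ) : Prop :=
  (∀ ω, 0 ≤ μ ω) ∧ ∑ ω, μ ω = 1

/-- The probability that the random variable `f` takes the value `a`. -/
def pr {Ω A : Type*} [Fintype Ω] [DecidableEq A] (μ : Ω → ℝ) (f : Ω → A) (a : A) : ℝ :=
  ∑ ω, if f ω = a then μ ω else 0

/-- Mutual information `I(f; g)`; terms with zero joint probability contribute `0`. -/
noncomputable def mi {Ω A B : Type*} [Fintype Ω] [Fintype A] [Fintype B]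
    [DecidableEq A] [DecidableEq B] (μ : Ω → ℝ) (f : Ω → A) (g : Ω → B) : ℝ :=
  ∑ a : A, ∑ b : B,
    pr μ (fun ω => (f ω, g ω)) (a, b) *
      Real.log (pr μ (fun ω => (f ω, g ω)) (a, b) / (pr μ f a * pr μ g b))

/-- Conditional mutual information `I(f; g | h)`. -/
noncomputable def cmi {Ω A B C : Type*} [Fintype Ω] [Fintype A] [Fintype B] [Fintype C]
    [DecidableEq A] [DecidableEq B] [DecidableEq C]
    (μ : Ω → ℝ) (f : Ω → A) (g : Ω → B) (h : Ω → C) : ℝ :=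
  ∑ c : C, ∑ a : A, ∑ b : B,
    pr μ (fun ω => ((f ω, g ω), h ω)) ((a, b), c) *
      Real.log (pr μ (fun ω => ((f ω, g ω), h ω)) ((a, b), c) * pr μ h c /
        (pr μ (fun ω => (f ω, h ω)) (a, c) * pr μ (fun ω => (g ω, h ω)) (b, c)))

/-- `f` and `g` are conditionally independent given `h`. -/
def CondIndepRV {Ω A B C : Type*} [Fintype Ω] [DecidableEq A] [DecidableEq B] [DecidableEq C]
    (μ : Ω → ℝ) (f : Ω → A) (g : Ω → B) (h : Ω → C) : Prop :=
  ∀ a b c, 0 < pr μ h c →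
    pr μ (fun ω => ((f ω, g ω), h ω)) ((a, b), c) * pr μ h c =
      pr μ (fun ω => (f ω, h ω)) (a, c) * pr μ (fun ω => (g ω, h ω)) (b, c)

/-- Entropy `H(f)`. -/
noncomputable def ent {Ω A : Type*} [Fintype Ω] [Fintype A] [DecidableEq A]
    (μ : Ω → ℝ) (f : Ω → A) : ℝ :=
  -∑ a : A, pr μ f a * Real.log (pr μ f a)

/-- Conditional entropy `H(f | g)`. -/
noncomputable def condEnt {Ω A B : Type*} [Fintype Ω] [Fintype A] [Fintype B]
    [DecidableEq A] [DecidableEq B] (μ : Ω → ℝ) (f : Ω → A) (g : Ω → B) : ℝ :=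
  -∑ a : A, ∑ b : B,
    pr μ (fun ω => (f ω, g ω)) (a, b) *
      Real.log (pr μ (fun ω => (f ω, g ω)) (a, b) / pr μ g b)

/-- The joint pmf of `(x, z)` induced by the data pmf `pd` and the encoder `q`. -/
def joint {X Z : Type*} (pd : X → ℝ) (q : X → Z → ℝ) : X × Z → ℝ :=
  fun ω => pd ω.1 * q ω.1 ω.2

/-- The first `i` coordinates `z_{≤ i}` of a vector `z ∈ V^K`. -/
def trunc {V : Type*} {K : ℕ} (i : ℕ) (h : i ≤ K) (v : Fin K → V) : Fin i → V :=
  fun j => v (Fin.castLE h j)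

/-- `- log x` valued in the extended reals, with `- log 0 = ⊤`. -/
noncomputable def negLog (x : ℝ) : EReal := if x = 0 then ⊤ else ((-Real.log x : ℝ) : EReal)

/-- An encoder is a conditional pmf `q(z | x)`. -/
def IsEncoder {X Z : Type*} [Fintype Z] (q : X → Z → ℝ) : Prop :=
  ∀ a, (∀ v, 0 ≤ q a v) ∧ ∑ v, q a v = 1

/-- A decoder is a family of conditional pmfs `p_i(x | z_{≤ i})`, `i = 1, …, K`. -/
def IsDecoder {X V : Type*} [Fintype X] (K : ℕ) (d : (i : ℕ) → (Fin i → V) → X → ℝ) : Prop :=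
  ∀ i, 1 ≤ i → i ≤ K → ∀ zc : Fin i → V, (∀ a, 0 ≤ d i zc a) ∧ ∑ a, d i zc a = 1

/-- The objective `L(q, {p_i}) = (1/K) ∑_{i=1}^K E[- log p_i(x | z_{≤ i})]`. -/
noncomputable def objL {X V : Type*} [Fintype X] [Fintype V] (K : ℕ)
    (pd : X → ℝ) (q : X → (Fin K → V) → ℝ) (d : (i : ℕ) → (Fin i → V) → X → ℝ) : EReal :=
  ((1 / K : ℝ) : EReal) *
    ∑ i : Fin K, ∑ a : X, ∑ v : Fin K → V,
      ((pd a * q a v : ℝ) : EReal) * negLog (d (i.1 + 1) (trunc (i.1 + 1) i.isLt v) a)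


section Helpers

open Real

variable {Ω A B C D E' : Type*} [Fintype Ω]

lemma pr_nonneg [DecidableEq A] {μ : Ω → ℝ} (hμ : ∀ ω, 0 ≤ μ ω) (f : Ω → A) (a : A) :
    0 ≤ pr μ f a := by
  apply Finset.sum_nonneg; intro ω _; split <;> simp [hμ ω]

lemma pr_congr [DecidableEq A] [DecidableEq B] {μ : Ω → ℝ} {f : Ω → A} {g : Ω → B}
    {a : A} {b : B} (h : ∀ ω, f ω = a ↔ g ω = b) : pr μ f a = pr μ g b := by
  unfold pr; apply Finset.sum_congr rfl; intro ω _
  by_cases hω : f ω = a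
  · rw [if_pos hω, if_pos ((h ω).1 hω)]
  · rw [if_neg hω, if_neg (fun hg => hω ((h ω).2 hg))]

lemma pr_mono [DecidableEq A] [DecidableEq B] {μ : Ω → ℝ} (hμ : ∀ ω, 0 ≤ μ ω)
    {f : Ω → A} {g : Ω → B} {a : A} {b : B} (h : ∀ ω, f ω = a → g ω = b) :
    pr μ f a ≤ pr μ g b := by
  unfold pr; apply Finset.sum_le_sum; intro ω _
  by_cases hω : f ω = a
  · rw [if_pos hω, if_pos (h ω hω)]
  · rw [if_neg hω]; split <;> simp [hμ ω]

lemma le_pr_apply [DecidableEq A] {μ : Ω → ℝ} (hμ : ∀ ω, 0 ≤ μ ω) (f : Ω → A) (ω : Ω) :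
    μ ω ≤ pr μ f (f ω) := by
  unfold pr
  have := Finset.single_le_sum (f := fun ω' => if f ω' = f ω then μ ω' else 0)
    (fun ω' _ => by show (0:ℝ) ≤ if f ω' = f ω then μ ω' else 0; split <;> simp [hμ ω']) (Finset.mem_univ ω)
  simpa using this

lemma pr_ne_zero_elim [DecidableEq A] {μ : Ω → ℝ} {f : Ω → A} {a : A}
    (h : pr μ f a ≠ 0) : ∃ ω, μ ω ≠ 0 ∧ f ω = a := by
  by_contra hc
  push_neg at hc
  apply h
  unfold pr
  apply Finset.sum_eq_zero; intro ω _
  by_cases hω : f ω = a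
  · rw [if_pos hω]
    by_contra hm
    exact (hc ω hm) hω
  · rw [if_neg hω]

lemma sum_pr_mul [DecidableEq A] [Fintype A] (μ : Ω → ℝ) (f : Ω → A) (X : A → ℝ) :
    ∑ a, pr μ f a * X a = ∑ ω, μ ω * X (f ω) := by
  unfold pr
  simp only [Finset.sum_mul, ite_mul, zero_mul]
  rw [Finset.sum_comm]
  apply Finset.sum_congr rfl; intro ω _
  rw [Finset.sum_ite_eq Finset.univ (f ω) (fun a => μ ω * X a)]
  simp


lemma coe_sum_ereal {ι : Type*} (s : Finset ι) (f : ι → ℝ) :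
    ((∑ i ∈ s, f i : ℝ) : EReal) = ∑ i ∈ s, ((f i : ℝ) : EReal) :=
  map_sum (⟨⟨Real.toEReal, EReal.coe_zero⟩, EReal.coe_add⟩ : ℝ →+ EReal) f s

section Marg

variable [DecidableEq A] [DecidableEq B] [Fintype A] [Fintype B]
  {μ : Ω → ℝ} (f : Ω → A) (g : Ω → B)

lemma marg_fst (b : B) : ∑ a, pr μ (fun ω => (f ω, g ω)) (a, b) = pr μ g b := by
  unfold pr
  rw [Finset.sum_comm]
  apply Finset.sum_congr rfl; intro ω _
  simp only [Prod.mk.injEq]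
  by_cases hg : g ω = b
  · simp only [hg, and_true]
    rw [Finset.sum_ite_eq Finset.univ (f ω) (fun _ => μ ω)]
    simp [hg]
  · simp [hg]

lemma marg_snd (a : A) : ∑ b, pr μ (fun ω => (f ω, g ω)) (a, b) = pr μ f a := by
  unfold pr
  rw [Finset.sum_comm]
  apply Finset.sum_congr rfl; intro ω _
  simp only [Prod.mk.injEq]
  by_cases hf : f ω = a
  · simp only [hf, true_and]
    rw [Finset.sum_ite_eq Finset.univ (g ω) (fun _ => μ ω)]
    simp [hf]
  · simp [hf]

end Marg

section EqSum

variable [DecidableEq A] [DecidableEq B] [DecidableEq C]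
  [Fintype A] [Fintype B] [Fintype C]
  (μ : Ω → ℝ) (f : Ω → A) (g : Ω → B) (h : Ω → C)

lemma mi_eq_sum :
    mi μ f g = ∑ ω, μ ω *
      Real.log (pr μ (fun ω' => (f ω', g ω')) (f ω, g ω) /
        (pr μ f (f ω) * pr μ g (g ω))) := by
  have key := sum_pr_mul μ (fun ω => (f ω, g ω))
    (fun p => Real.log (pr μ (fun ω' => (f ω', g ω')) p / (pr μ f p.1 * pr μ g p.2)))
  rw [← key, Fintype.sum_prod_type]
  rfl

lemma ent_eq_sum : ent μ f = -∑ ω, μ ω * Real.log (pr μ f (f ω)) := by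
  unfold ent
  rw [sum_pr_mul μ f (fun a => Real.log (pr μ f a))]

lemma condEnt_eq_sum :
    condEnt μ f g = -∑ ω, μ ω *
      Real.log (pr μ (fun ω' => (f ω', g ω')) (f ω, g ω) / pr μ g (g ω)) := by
  have key := sum_pr_mul μ (fun ω => (f ω, g ω))
    (fun p => Real.log (pr μ (fun ω' => (f ω', g ω')) p / pr μ g p.2))
  unfold condEnt
  rw [← key, Fintype.sum_prod_type]

lemma cmi_eq_sum :
    cmi μ f g h = ∑ ω, μ ω *
      Real.log (pr μ (fun ω' => ((f ω', g ω'), h ω')) ((f ω, g ω), h ω) * pr μ h (h ω) /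
        (pr μ (fun ω' => (f ω', h ω')) (f ω, h ω) *
          pr μ (fun ω' => (g ω', h ω')) (g ω, h ω))) := by
  have key := sum_pr_mul μ (fun ω => ((f ω, g ω), h ω))
    (fun p => Real.log (pr μ (fun ω' => ((f ω', g ω'), h ω')) p * pr μ h p.2 /
      (pr μ (fun ω' => (f ω', h ω')) (p.1.1, p.2) *
        pr μ (fun ω' => (g ω', h ω')) (p.1.2, p.2))))
  rw [← key, Fintype.sum_prod_type, Fintype.sum_prod_type]
  unfold cmi
  rw [Finset.sum_comm]
  apply Finset.sum_congr rfl; intro a _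
  rw [Finset.sum_comm]

end EqSum

lemma log3 {x z w : ℝ} (hx : 0 < x) (hz : 0 < z) (hw : 0 < w) :
    Real.log (x / (z * w)) = Real.log x - Real.log z - Real.log w := by
  rw [Real.log_div hx.ne' (by positivity), Real.log_mul hz.ne' hw.ne']; ring

lemma log4 {x y z w : ℝ} (hx : 0 < x) (hy : 0 < y) (hz : 0 < z) (hw : 0 < w) :
    Real.log (x * y / (z * w)) = Real.log x + Real.log y - Real.log z - Real.log w := by
  rw [Real.log_div (by positivity) (by positivity), Real.log_mul hx.ne' hy.ne',
    Real.log_mul hz.ne' hw.ne']; ring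

section Identities

variable [DecidableEq A] [DecidableEq B] [DecidableEq C] [DecidableEq D]
  [Fintype A] [Fintype B] [Fintype C] [Fintype D] {μ : Ω → ℝ}

lemma pr_apply_pos (hμ : ∀ ω, 0 ≤ μ ω) {f : Ω → A} {ω : Ω} (hω : μ ω ≠ 0) :
    0 < pr μ f (f ω) :=
  lt_of_lt_of_le (lt_of_le_of_ne (hμ ω) (Ne.symm hω)) (le_pr_apply hμ f ω)

lemma mi_chain (hμ : ∀ ω, 0 ≤ μ ω) (f : Ω → A) (g : Ω → B) (h : Ω → C) :
    mi μ f (fun ω => (g ω, h ω)) = mi μ f h + cmi μ f g h := by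
  rw [mi_eq_sum, mi_eq_sum, cmi_eq_sum, ← Finset.sum_add_distrib]
  apply Finset.sum_congr rfl; intro ω _
  by_cases hω : μ ω = 0
  · simp [hω]
  · rw [← mul_add]
    congr 1
    have e1 : pr μ (fun ω' => (f ω', (g ω', h ω'))) (f ω, (g ω, h ω))
        = pr μ (fun ω' => ((f ω', g ω'), h ω')) ((f ω, g ω), h ω) :=
      pr_congr (fun ω' => by simp only [Prod.mk.injEq]; tauto)
    rw [e1]
    have hfgh : 0 < pr μ (fun ω' => ((f ω', g ω'), h ω')) ((f ω, g ω), h ω) :=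
      pr_apply_pos hμ hω
    have hf : 0 < pr μ f (f ω) := pr_apply_pos hμ hω
    have hgh : 0 < pr μ (fun ω' => (g ω', h ω')) (g ω, h ω) := pr_apply_pos hμ hω
    have hfh : 0 < pr μ (fun ω' => (f ω', h ω')) (f ω, h ω) := pr_apply_pos hμ hω
    have hh : 0 < pr μ h (h ω) := pr_apply_pos hμ hω
    rw [log3 hfgh hf hgh, log3 hfh hf hh, log4 hfgh hh hfh hgh]
    ring

lemma mi_eq_ent_sub_condEnt (hμ : ∀ ω, 0 ≤ μ ω) (f : Ω → A) (g : Ω → B) :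
    mi μ f g = ent μ f - condEnt μ f g := by
  rw [mi_eq_sum, ent_eq_sum, condEnt_eq_sum, neg_sub_neg, ← Finset.sum_sub_distrib]
  apply Finset.sum_congr rfl; intro ω _
  by_cases hω : μ ω = 0
  · simp [hω]
  · rw [← mul_sub]
    congr 1
    have hfg : 0 < pr μ (fun ω' => (f ω', g ω')) (f ω, g ω) := pr_apply_pos hμ hω
    have hf : 0 < pr μ f (f ω) := pr_apply_pos hμ hω
    have hg : 0 < pr μ g (g ω) := pr_apply_pos hμ hω
    rw [log3 hfg hf hg, Real.log_div hfg.ne' hg.ne']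
    ring

lemma cmi_exchange (hμ : ∀ ω, 0 ≤ μ ω) (f : Ω → A) (g : Ω → B) (e : Ω → C) (h : Ω → D) :
    cmi μ f e (fun ω => (g ω, h ω)) + cmi μ g e h
      = cmi μ g e (fun ω => (f ω, h ω)) + cmi μ f e h := by
  rw [cmi_eq_sum, cmi_eq_sum, cmi_eq_sum, cmi_eq_sum,
    ← Finset.sum_add_distrib, ← Finset.sum_add_distrib]
  apply Finset.sum_congr rfl; intro ω _
  by_cases hω : μ ω = 0
  · simp [hω]
  · rw [← mul_add, ← mul_add]
    congr 1
    -- canonicalize the pr's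
    have r1 : pr μ (fun ω' => ((g ω', e ω'), (f ω', h ω'))) ((g ω, e ω), (f ω, h ω))
        = pr μ (fun ω' => ((f ω', e ω'), (g ω', h ω'))) ((f ω, e ω), (g ω, h ω)) :=
      pr_congr (fun ω' => by simp only [Prod.mk.injEq]; tauto)
    have r2 : pr μ (fun ω' => (g ω', (f ω', h ω'))) (g ω, (f ω, h ω))
        = pr μ (fun ω' => (f ω', (g ω', h ω'))) (f ω, (g ω, h ω)) :=
      pr_congr (fun ω' => by simp only [Prod.mk.injEq]; tauto)
    have r3 : pr μ (fun ω' => ((g ω', e ω'), h ω')) ((g ω, e ω), h ω)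
        = pr μ (fun ω' => (e ω', (g ω', h ω'))) (e ω, (g ω, h ω)) :=
      pr_congr (fun ω' => by simp only [Prod.mk.injEq]; tauto)
    have r4 : pr μ (fun ω' => ((f ω', e ω'), h ω')) ((f ω, e ω), h ω)
        = pr μ (fun ω' => (e ω', (f ω', h ω'))) (e ω, (f ω, h ω)) :=
      pr_congr (fun ω' => by simp only [Prod.mk.injEq]; tauto)
    rw [r1, r2, r3, r4]
    have hA : 0 < pr μ (fun ω' => ((f ω', e ω'), (g ω', h ω'))) ((f ω, e ω), (g ω, h ω)) :=
      pr_apply_pos hμ hω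
    have hgh : 0 < pr μ (fun ω' => (g ω', h ω')) (g ω, h ω) := pr_apply_pos hμ hω
    have hfgh : 0 < pr μ (fun ω' => (f ω', (g ω', h ω'))) (f ω, (g ω, h ω)) :=
      pr_apply_pos hμ hω
    have hegh : 0 < pr μ (fun ω' => (e ω', (g ω', h ω'))) (e ω, (g ω, h ω)) :=
      pr_apply_pos hμ hω
    have hh : 0 < pr μ h (h ω) := pr_apply_pos hμ hω
    have heh : 0 < pr μ (fun ω' => (e ω', h ω')) (e ω, h ω) := pr_apply_pos hμ hω
    have hfh : 0 < pr μ (fun ω' => (f ω', h ω')) (f ω, h ω) := pr_apply_pos hμ hω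
    have hefh : 0 < pr μ (fun ω' => (e ω', (f ω', h ω'))) (e ω, (f ω, h ω)) :=
      pr_apply_pos hμ hω
    rw [log4 hA hgh hfgh hegh, log4 hegh hh hgh heh, log4 hA hfh hfgh hefh,
      log4 hefh hh hfh heh]
    ring

lemma cmi_nonneg (hμ : ∀ ω, 0 ≤ μ ω) (f : Ω → A) (g : Ω → B) (h : Ω → C) :
    0 ≤ cmi μ f g h := by
  unfold cmi
  apply Finset.sum_nonneg; intro c _
  by_cases hc : pr μ h c = 0
  · apply le_of_eq; symm
    apply Finset.sum_eq_zero; intro a _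
    apply Finset.sum_eq_zero; intro b _
    have h0 : pr μ (fun ω => ((f ω, g ω), h ω)) ((a, b), c) = 0 := by
      refine le_antisymm ?_ (pr_nonneg hμ _ _)
      rw [← hc]
      exact pr_mono hμ (fun ω hw => by
        simp only [Prod.mk.injEq] at hw; exact hw.2)
    rw [h0]; simp
  · have hZ : 0 < pr μ h c := (pr_nonneg hμ h c).lt_of_ne' hc
    have hsum1 : ∑ a, ∑ b, pr μ (fun ω => ((f ω, g ω), h ω)) ((a, b), c) = pr μ h c := by
      have step : ∀ a, ∑ b, pr μ (fun ω => ((f ω, g ω), h ω)) ((a, b), c)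
          = pr μ (fun ω => (f ω, h ω)) (a, c) := by
        intro a
        have e : ∀ b, pr μ (fun ω => ((f ω, g ω), h ω)) ((a, b), c)
            = pr μ (fun ω => (g ω, (f ω, h ω))) (b, (a, c)) := fun b =>
          pr_congr (fun ω => by simp only [Prod.mk.injEq]; tauto)
        simp_rw [e]
        exact marg_fst g (fun ω => (f ω, h ω)) (a, c)
      simp_rw [step]
      exact marg_fst f h c
    have hsA : ∑ a, pr μ (fun ω => (f ω, h ω)) (a, c) = pr μ h c := marg_fst f h c
    have hsB : ∑ b, pr μ (fun ω => (g ω, h ω)) (b, c) = pr μ h c := marg_fst g h c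
    have hzero : ∑ a, ∑ b, (pr μ (fun ω => ((f ω, g ω), h ω)) ((a, b), c)
        - pr μ (fun ω => (f ω, h ω)) (a, c) * pr μ (fun ω => (g ω, h ω)) (b, c) / pr μ h c)
        = 0 := by
      simp only [Finset.sum_sub_distrib]
      rw [hsum1]
      have e2 : ∀ a, ∑ b, pr μ (fun ω => (f ω, h ω)) (a, c)
          * pr μ (fun ω => (g ω, h ω)) (b, c) / pr μ h c
          = pr μ (fun ω => (f ω, h ω)) (a, c) := by
        intro a
        rw [← Finset.sum_div, ← Finset.mul_sum, hsB, mul_div_assoc, div_self hZ.ne', mul_one]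
      simp_rw [e2, hsA, sub_self]
    rw [← hzero]
    apply Finset.sum_le_sum; intro a _
    apply Finset.sum_le_sum; intro b _
    set p := pr μ (fun ω => ((f ω, g ω), h ω)) ((a, b), c) with hp_def
    set pa := pr μ (fun ω => (f ω, h ω)) (a, c) with hpa_def
    set pb := pr μ (fun ω => (g ω, h ω)) (b, c) with hpb_def
    set Z := pr μ h c with hZ_def
    by_cases hp : p = 0
    · rw [hp]
      simp only [zero_mul, zero_sub]
      have : 0 ≤ pa * pb / Z := by
        apply div_nonneg (mul_nonneg (pr_nonneg hμ _ _) (pr_nonneg hμ _ _)) hZ.le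
      linarith
    · have hppos : 0 < p := (pr_nonneg hμ _ _).lt_of_ne' hp
      have hpa : 0 < pa := lt_of_lt_of_le hppos
        (pr_mono hμ (fun ω hw => by simp only [Prod.mk.injEq] at hw ⊢; tauto))
      have hpb : 0 < pb := lt_of_lt_of_le hppos
        (pr_mono hμ (fun ω hw => by simp only [Prod.mk.injEq] at hw ⊢; tauto))
      have ht : 0 < p * Z / (pa * pb) := by positivity
      have hlog : 1 - (p * Z / (pa * pb))⁻¹ ≤ Real.log (p * Z / (pa * pb)) := by
        have := Real.log_le_sub_one_of_pos (inv_pos.mpr ht)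
        rw [Real.log_inv] at this
        linarith
      have hmul := mul_le_mul_of_nonneg_left hlog hppos.le
      calc p - pa * pb / Z = p * (1 - (p * Z / (pa * pb))⁻¹) := by
            field_simp
        _ ≤ p * Real.log (p * Z / (pa * pb)) := hmul
  done

lemma cmi_eq_zero_of_condIndep (hμ : ∀ ω, 0 ≤ μ ω) {f : Ω → A} {g : Ω → B} {h : Ω → C}
    (hind : CondIndepRV μ f g h) : cmi μ f g h = 0 := by
  unfold cmi
  apply Finset.sum_eq_zero; intro c _
  apply Finset.sum_eq_zero; intro a _
  apply Finset.sum_eq_zero; intro b _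
  by_cases hp : pr μ (fun ω => ((f ω, g ω), h ω)) ((a, b), c) = 0
  · rw [hp]; simp
  · have hppos : 0 < pr μ (fun ω => ((f ω, g ω), h ω)) ((a, b), c) :=
      (pr_nonneg hμ _ _).lt_of_ne' hp
    have hZ : 0 < pr μ h c := lt_of_lt_of_le hppos
      (pr_mono hμ (fun ω hw => by simp only [Prod.mk.injEq] at hw; exact hw.2))
    rw [hind a b c hZ, div_self (by rw [← hind a b c hZ]; positivity)]
    simp

lemma mi_comp_right {e : B → C} (he : Function.Injective e) (f : Ω → A) (g : Ω → B) :
    mi μ f (fun ω => e (g ω)) = mi μ f g := by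
  rw [mi_eq_sum, mi_eq_sum]
  apply Finset.sum_congr rfl; intro ω _
  have r1 : pr μ (fun ω' => (f ω', e (g ω'))) (f ω, e (g ω))
      = pr μ (fun ω' => (f ω', g ω')) (f ω, g ω) :=
    pr_congr (fun ω' => by simp only [Prod.mk.injEq, he.eq_iff])
  have r2 : pr μ (fun ω' => e (g ω')) (e (g ω)) = pr μ g (g ω) :=
    pr_congr (fun ω' => by simp only [he.eq_iff])
  rw [r1, r2]

lemma cmi_comp_third {e : C → D} (he : Function.Injective e)
    (f : Ω → A) (g : Ω → B) (h : Ω → C) :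
    cmi μ f g (fun ω => e (h ω)) = cmi μ f g h := by
  rw [cmi_eq_sum, cmi_eq_sum]
  apply Finset.sum_congr rfl; intro ω _
  have r1 : pr μ (fun ω' => ((f ω', g ω'), e (h ω'))) ((f ω, g ω), e (h ω))
      = pr μ (fun ω' => ((f ω', g ω'), h ω')) ((f ω, g ω), h ω) :=
    pr_congr (fun ω' => by simp only [Prod.mk.injEq, he.eq_iff])
  have r2 : pr μ (fun ω' => e (h ω')) (e (h ω)) = pr μ h (h ω) :=
    pr_congr (fun ω' => by simp only [he.eq_iff])
  have r3 : pr μ (fun ω' => (f ω', e (h ω'))) (f ω, e (h ω))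
      = pr μ (fun ω' => (f ω', h ω')) (f ω, h ω) :=
    pr_congr (fun ω' => by simp only [Prod.mk.injEq, he.eq_iff])
  have r4 : pr μ (fun ω' => (g ω', e (h ω'))) (g ω, e (h ω))
      = pr μ (fun ω' => (g ω', h ω')) (g ω, h ω) :=
    pr_congr (fun ω' => by simp only [Prod.mk.injEq, he.eq_iff])
  rw [r1, r2, r3, r4]

lemma pr_comp_equiv {Ω' : Type*} [Fintype Ω'] (Φ : Ω' ≃ Ω) (μ : Ω → ℝ) (F : Ω' → A) (x : A) :
    pr (fun ω' => μ (Φ ω')) F x = pr μ (fun ω => F (Φ.symm ω)) x := by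
  unfold pr
  exact Fintype.sum_equiv Φ _ _ (fun ω' => by simp)

lemma mi_comp_equiv_domain {Ω' : Type*} [Fintype Ω'] (Φ : Ω' ≃ Ω) (μ : Ω → ℝ)
    (f : Ω' → A) (g : Ω' → B) :
    mi (fun ω' => μ (Φ ω')) f g
      = mi μ (fun ω => f (Φ.symm ω)) (fun ω => g (Φ.symm ω)) := by
  unfold mi
  apply Finset.sum_congr rfl; intro a _
  apply Finset.sum_congr rfl; intro b _
  rw [pr_comp_equiv Φ μ (fun ω' => (f ω', g ω')) (a, b), pr_comp_equiv Φ μ f a,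
    pr_comp_equiv Φ μ g b]

lemma condEnt_comp_equiv_domain {Ω' : Type*} [Fintype Ω'] (Φ : Ω' ≃ Ω) (μ : Ω → ℝ)
    (f : Ω' → A) (g : Ω' → B) :
    condEnt (fun ω' => μ (Φ ω')) f g
      = condEnt μ (fun ω => f (Φ.symm ω)) (fun ω => g (Φ.symm ω)) := by
  unfold condEnt
  congr 1
  apply Finset.sum_congr rfl; intro a _
  apply Finset.sum_congr rfl; intro b _
  rw [pr_comp_equiv Φ μ (fun ω' => (f ω', g ω')) (a, b), pr_comp_equiv Φ μ g b]

end Identities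

section Gibbs

variable [DecidableEq A] [DecidableEq B] [Fintype A] [Fintype B] {μ : Ω → ℝ}

lemma negLog_nonneg {x : ℝ} (h0 : 0 ≤ x) (h1 : x ≤ 1) : (0 : EReal) ≤ negLog x := by
  unfold negLog
  split
  · exact le_top
  · rw [← EReal.coe_zero, EReal.coe_le_coe_iff]
    have : Real.log x ≤ 0 := Real.log_nonpos h0 h1
    linarith

lemma ereal_term_nonneg {c : ℝ} (hc : 0 ≤ c) {x : ℝ} (h0 : 0 ≤ x) (h1 : x ≤ 1) :
    (0 : EReal) ≤ (c : EReal) * negLog x :=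
  mul_nonneg (EReal.coe_nonneg.mpr hc) (negLog_nonneg h0 h1)

lemma real_gibbs (hμ : ∀ ω, 0 ≤ μ ω) (f : Ω → A) (g : Ω → B) (r : B → A → ℝ)
    (hr0 : ∀ b a, 0 ≤ r b a) (hr1 : ∀ b, ∑ a, r b a = 1)
    (hsupp : ∀ ω, μ ω ≠ 0 → r (g ω) (f ω) ≠ 0) :
    condEnt μ f g ≤ ∑ ω, μ ω * (-Real.log (r (g ω) (f ω))) := by
  have hS : ∑ ω, μ ω * (-Real.log (r (g ω) (f ω)))
      = ∑ b, ∑ a, pr μ (fun ω => (f ω, g ω)) (a, b) * (-Real.log (r b a)) := by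
    rw [← sum_pr_mul μ (fun ω => (f ω, g ω)) (fun p => -Real.log (r p.2 p.1)),
      Fintype.sum_prod_type]
    exact Finset.sum_comm
  have hCE : condEnt μ f g = -∑ b, ∑ a,
      pr μ (fun ω => (f ω, g ω)) (a, b) *
        Real.log (pr μ (fun ω => (f ω, g ω)) (a, b) / pr μ g b) := by
    unfold condEnt
    rw [Finset.sum_comm]
  rw [hS, hCE]
  have key : ∀ b, 0 ≤ ∑ a, (pr μ (fun ω => (f ω, g ω)) (a, b) * (-Real.log (r b a))
      + pr μ (fun ω => (f ω, g ω)) (a, b) *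
          Real.log (pr μ (fun ω => (f ω, g ω)) (a, b) / pr μ g b)) := by
    intro b
    by_cases hb : pr μ g b = 0
    · apply le_of_eq; symm
      apply Finset.sum_eq_zero; intro a _
      have h0 : pr μ (fun ω => (f ω, g ω)) (a, b) = 0 := by
        refine le_antisymm ?_ (pr_nonneg hμ _ _)
        rw [← hb]
        exact pr_mono hμ (fun ω hw => by simp only [Prod.mk.injEq] at hw; exact hw.2)
      rw [h0]; ring
    · have hbpos : 0 < pr μ g b := (pr_nonneg hμ g b).lt_of_ne' hb
      have hzero : ∑ a, (pr μ (fun ω => (f ω, g ω)) (a, b) - pr μ g b * r b a) = 0 := by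
        rw [Finset.sum_sub_distrib, marg_fst f g b, ← Finset.mul_sum, hr1 b, mul_one,
          sub_self]
      rw [← hzero]
      apply Finset.sum_le_sum; intro a _
      set p := pr μ (fun ω => (f ω, g ω)) (a, b) with hp_def
      by_cases hp : p = 0
      · rw [hp]
        have : 0 ≤ pr μ g b * r b a := mul_nonneg hbpos.le (hr0 b a)
        simp only [zero_mul, zero_add, zero_sub]
        linarith
      · have hppos : 0 < p := (pr_nonneg hμ _ _).lt_of_ne' hp
        obtain ⟨ω₀, hω₀, hfg₀⟩ := pr_ne_zero_elim hp
        have hfa : f ω₀ = a := by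
          have := congrArg Prod.fst hfg₀; simpa using this
        have hgb : g ω₀ = b := by
          have := congrArg Prod.snd hfg₀; simpa using this
        have hrpos : 0 < r b a := by
          have := hsupp ω₀ hω₀
          rw [hfa, hgb] at this
          exact (hr0 b a).lt_of_ne' this
        have ht : 0 < p / (pr μ g b * r b a) := by positivity
        have hlog : 1 - (p / (pr μ g b * r b a))⁻¹ ≤ Real.log (p / (pr μ g b * r b a)) := by
          have := Real.log_le_sub_one_of_pos (inv_pos.mpr ht)
          rw [Real.log_inv] at this
          linarith
        have hmul := mul_le_mul_of_nonneg_left hlog hppos.le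
        have hexp : Real.log (p / (pr μ g b * r b a))
            = -Real.log (r b a) + Real.log (p / pr μ g b) := by
          rw [Real.log_div hppos.ne' (by positivity), Real.log_mul hbpos.ne' hrpos.ne',
            Real.log_div hppos.ne' hbpos.ne']
          ring
        rw [hexp] at hmul
        calc p - pr μ g b * r b a = p * (1 - (p / (pr μ g b * r b a))⁻¹) := by
              field_simp
          _ ≤ p * (-Real.log (r b a) + Real.log (p / pr μ g b)) := hmul
          _ = p * -Real.log (r b a) + p * Real.log (p / pr μ g b) := by ring
  have h2 := Finset.sum_nonneg (fun b (_ : b ∈ Finset.univ) => key b)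
  simp_rw [Finset.sum_add_distrib] at h2
  linarith

lemma ereal_gibbs (hμ : ∀ ω, 0 ≤ μ ω) (f : Ω → A) (g : Ω → B) (r : B → A → ℝ)
    (hr0 : ∀ b a, 0 ≤ r b a) (hr1 : ∀ b, ∑ a, r b a = 1) :
    ((condEnt μ f g : ℝ) : EReal) ≤ ∑ ω, ((μ ω : ℝ) : EReal) * negLog (r (g ω) (f ω)) := by
  have hr_le_one : ∀ b a, r b a ≤ 1 := fun b a => by
    rw [← hr1 b]; exact Finset.single_le_sum (fun a' _ => hr0 b a') (Finset.mem_univ a)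
  by_cases hbad : ∃ ω, μ ω ≠ 0 ∧ r (g ω) (f ω) = 0
  · obtain ⟨ω₀, hω₀, hr₀⟩ := hbad
    have htop : ((μ ω₀ : ℝ) : EReal) * negLog (r (g ω₀) (f ω₀)) = ⊤ := by
      rw [hr₀]
      unfold negLog
      rw [if_pos rfl]
      exact EReal.coe_mul_top_of_pos ((hμ ω₀).lt_of_ne' hω₀)
    refine le_trans le_top ?_
    rw [← htop]
    exact Finset.single_le_sum
      (f := fun ω => ((μ ω : ℝ) : EReal) * negLog (r (g ω) (f ω)))
      (fun ω _ => ereal_term_nonneg (hμ ω) (hr0 _ _) (hr_le_one _ _)) (Finset.mem_univ ω₀)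
  · push_neg at hbad
    have hterm : ∀ ω, ((μ ω : ℝ) : EReal) * negLog (r (g ω) (f ω))
        = ((μ ω * (-Real.log (r (g ω) (f ω))) : ℝ) : EReal) := by
      intro ω
      by_cases hω : μ ω = 0
      · rw [hω]
        simp
      · unfold negLog
        rw [if_neg (hbad ω hω), ← EReal.coe_mul]
    simp_rw [hterm]
    rw [← coe_sum_ereal, EReal.coe_le_coe_iff]
    exact real_gibbs hμ f g r hr0 hr1 hbad

lemma ereal_gibbs_eq (hμ : ∀ ω, 0 ≤ μ ω) (f : Ω → A) (g : Ω → B) (r : B → A → ℝ)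
    (hr : ∀ ω, μ ω ≠ 0 →
      r (g ω) (f ω) = pr μ (fun ω' => (f ω', g ω')) (f ω, g ω) / pr μ g (g ω)) :
    ∑ ω, ((μ ω : ℝ) : EReal) * negLog (r (g ω) (f ω)) = ((condEnt μ f g : ℝ) : EReal) := by
  have hterm : ∀ ω, ((μ ω : ℝ) : EReal) * negLog (r (g ω) (f ω))
      = (((μ ω * (-Real.log (pr μ (fun ω' => (f ω', g ω')) (f ω, g ω) / pr μ g (g ω)))
          : ℝ) : EReal)) := by
    intro ω
    by_cases hω : μ ω = 0
    · rw [hω]; simp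
    · have hfg : 0 < pr μ (fun ω' => (f ω', g ω')) (f ω, g ω) := pr_apply_pos hμ hω
      have hg : 0 < pr μ g (g ω) := pr_apply_pos hμ hω
      rw [hr ω hω]
      unfold negLog
      rw [if_neg (by positivity), ← EReal.coe_mul]
  simp_rw [hterm]
  rw [← coe_sum_ereal]
  congr 1
  rw [condEnt_eq_sum, ← Finset.sum_neg_distrib]
  apply Finset.sum_congr rfl; intro ω _
  ring

end Gibbs

section Enc

variable {X V : Type*} [Fintype X] [Fintype V] [DecidableEq X] [DecidableEq V] {K : ℕ}

lemma joint_nonneg {pd : X → ℝ} {Q : X → (Fin K → V) → ℝ}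
    (hpd : IsPMF pd) (hQ : IsEncoder Q) :
    ∀ ω : X × (Fin K → V), 0 ≤ joint pd Q ω :=
  fun ω => mul_nonneg (hpd.1 _) ((hQ _).1 _)

lemma pr_joint_fst {pd : X → ℝ} {Q : X → (Fin K → V) → ℝ} (hQ : IsEncoder Q) (a : X) :
    pr (joint pd Q) Prod.fst a = pd a := by
  unfold pr joint
  rw [Fintype.sum_prod_type]
  have step : ∀ x, (∑ v, if (x, v).1 = a then pd (x, v).1 * Q (x, v).1 (x, v).2 else 0)
      = if x = a then pd x else 0 := by
    intro x
    by_cases hx : x = a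
    · simp only [hx, if_pos rfl, if_true]
      rw [← Finset.mul_sum, (hQ a).2, mul_one]
    · simp [hx]
  simp_rw [step]
  rw [Finset.sum_ite_eq' Finset.univ a pd]
  simp

lemma ent_joint_fst {pd : X → ℝ} {Q Q' : X → (Fin K → V) → ℝ}
    (hQ : IsEncoder Q) (hQ' : IsEncoder Q') :
    ent (joint pd Q) Prod.fst = ent (joint pd Q') Prod.fst := by
  unfold ent
  congr 1
  apply Finset.sum_congr rfl; intro a _
  rw [pr_joint_fst hQ, pr_joint_fst hQ']

/-- The optimal (conditional-distribution) decoder for an encoder `Q`. -/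
noncomputable def optDec (K : ℕ) (pd : X → ℝ) (Q : X → (Fin K → V) → ℝ) :
    (i : ℕ) → (Fin i → V) → X → ℝ := fun i zc a =>
  if hi : i ≤ K then
    (if pr (joint pd Q) (fun ω : X × (Fin K → V) => trunc i hi ω.2) zc = 0 then
      (Fintype.card X : ℝ)⁻¹
    else
      pr (joint pd Q) (fun ω : X × (Fin K → V) => (ω.1, trunc i hi ω.2)) (a, zc)
        / pr (joint pd Q) (fun ω : X × (Fin K → V) => trunc i hi ω.2) zc)
  else (Fintype.card X : ℝ)⁻¹

lemma optDec_isDecoder [Nonempty X] {pd : X → ℝ} {Q : X → (Fin K → V) → ℝ}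
    (hpd : IsPMF pd) (hQ : IsEncoder Q) : IsDecoder K (optDec K pd Q) := by
  have hcard : (0 : ℝ) < (Fintype.card X : ℝ) := by
    exact_mod_cast Fintype.card_pos
  intro i _ hiK zc
  constructor
  · intro a
    unfold optDec
    rw [dif_pos hiK]
    split
    · positivity
    · exact div_nonneg (pr_nonneg (joint_nonneg hpd hQ) _ _)
        (pr_nonneg (joint_nonneg hpd hQ) _ _)
  · unfold optDec
    simp only [dif_pos hiK]
    by_cases h0 : pr (joint pd Q) (fun ω : X × (Fin K → V) => trunc i hiK ω.2) zc = 0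
    · simp only [if_pos h0]
      rw [Finset.sum_const, Finset.card_univ, nsmul_eq_mul, mul_inv_cancel₀ hcard.ne']
    · simp only [if_neg h0]
      rw [← Finset.sum_div]
      rw [marg_fst (fun ω : X × (Fin K → V) => ω.1) (fun ω => trunc i hiK ω.2) zc]
      exact div_self h0

lemma objL_ge {pd : X → ℝ} {Q : X → (Fin K → V) → ℝ}
    (hpd : IsPMF pd) (hQ : IsEncoder Q)
    {D : (i : ℕ) → (Fin i → V) → X → ℝ} (hD : IsDecoder K D) :
    (((1 / K : ℝ) * ∑ i : Fin K,
      condEnt (joint pd Q) Prod.fst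
        (fun ω : X × (Fin K → V) => trunc (i.1 + 1) i.isLt ω.2) : ℝ) : EReal)
      ≤ objL K pd Q D := by
  unfold objL
  rw [EReal.coe_mul, coe_sum_ereal]
  apply mul_le_mul_of_nonneg_left ?_ (EReal.coe_nonneg.mpr (by positivity))
  apply Finset.sum_le_sum
  intro i _
  have hb := ereal_gibbs (μ := joint pd Q) (joint_nonneg hpd hQ) Prod.fst
    (fun ω => trunc (i.1 + 1) i.isLt ω.2) (D (i.1 + 1))
    (fun zc a => (hD (i.1 + 1) (by omega) i.isLt zc).1 a)
    (fun zc => (hD (i.1 + 1) (by omega) i.isLt zc).2)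
  refine le_trans hb (le_of_eq ?_)
  rw [Fintype.sum_prod_type]
  rfl

lemma objL_opt [Nonempty X] {pd : X → ℝ} {Q : X → (Fin K → V) → ℝ}
    (hpd : IsPMF pd) (hQ : IsEncoder Q) :
    objL K pd Q (optDec K pd Q)
      = (((1 / K : ℝ) * ∑ i : Fin K,
          condEnt (joint pd Q) Prod.fst
            (fun ω : X × (Fin K → V) => trunc (i.1 + 1) i.isLt ω.2) : ℝ) : EReal) := by
  unfold objL
  rw [EReal.coe_mul, coe_sum_ereal]
  congr 1
  apply Finset.sum_congr rfl
  intro i _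
  have hb := ereal_gibbs_eq (μ := joint pd Q) (joint_nonneg hpd hQ) Prod.fst
    (fun ω => trunc (i.1 + 1) i.isLt ω.2) (optDec K pd Q (i.1 + 1)) ?_
  · rw [← hb, Fintype.sum_prod_type]
    rfl
  · intro ω hω
    unfold optDec
    rw [dif_pos (show i.1 + 1 ≤ K from i.isLt)]
    rw [if_neg (pr_apply_pos (joint_nonneg hpd hQ) hω).ne']

end Enc

/-- Recasting a tuple along an equality `m = n` of lengths. -/
def recastE (V : Type*) {m n : ℕ} (h : m = n) : (Fin m → V) ≃ (Fin n → V) where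
  toFun w := fun k => w ⟨k.1, by omega⟩
  invFun w := fun k => w ⟨k.1, by omega⟩
  left_inv w := by funext k; exact congrArg w (Fin.ext rfl)
  right_inv w := by funext k; exact congrArg w (Fin.ext rfl)

/-- Splitting off the last coordinate of a tuple. -/
def insEquiv (V : Type*) (m n : ℕ) (h : m + 1 = n) :
    V × (Fin m → V) ≃ (Fin n → V) where
  toFun p := fun k => if hk : k.1 < m then p.2 ⟨k.1, hk⟩ else p.1
  invFun u := (u ⟨m, by omega⟩, fun j => u ⟨j.1, by omega⟩)
  left_inv p := by
    obtain ⟨x, w⟩ := p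
    dsimp only
    rw [Prod.mk.injEq]
    constructor
    · rw [dif_neg (lt_irrefl m)]
    · funext j
      rw [dif_pos j.2]
  right_inv u := by
    funext k
    dsimp only
    have hk2 := k.2
    by_cases hk : k.1 < m
    · rw [dif_pos hk]
    · rw [dif_neg hk]
      have hm' : k.1 = m := by omega
      exact congrArg u (Fin.ext hm'.symm)

lemma mi_trunc_congr {X V : Type*} [Fintype X] [Fintype V] [DecidableEq X] [DecidableEq V]
    {K : ℕ} (μ : X × (Fin K → V) → ℝ) {m n : ℕ} (h : m = n) (hm : m ≤ K) (hn : n ≤ K) :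
    mi μ Prod.fst (fun ω => trunc n hn ω.2) = mi μ Prod.fst (fun ω => trunc m hm ω.2) := by
  have hfun : (fun ω : X × (Fin K → V) => trunc n hn ω.2)
      = fun ω => recastE V h (trunc m hm ω.2) := by
    funext ω
    funext k
    show ω.2 _ = ω.2 _
    exact congrArg ω.2 (Fin.ext rfl)
  rw [hfun, mi_comp_right (recastE V h).injective]

lemma insEquiv_apply (V : Type*) (m n : ℕ) (h : m + 1 = n) (p : V × (Fin m → V)) (k : Fin n) :
    insEquiv V m n h p k = if hk : k.1 < m then p.2 ⟨k.1, hk⟩ else p.1 := rfl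

/-- Permuting coordinates of a tuple. -/
def swapCoordEquiv {V : Type*} {n : ℕ} (s : Equiv.Perm (Fin n)) :
    (Fin n → V) ≃ (Fin n → V) where
  toFun w := fun k => w (s k)
  invFun w := fun k => w (s.symm k)
  left_inv w := by funext k; exact congrArg w (Equiv.apply_symm_apply s k)
  right_inv w := by funext k; exact congrArg w (Equiv.symm_apply_apply s k)

lemma swapCoordEquiv_apply {V : Type*} {n : ℕ} (s : Equiv.Perm (Fin n)) (w : Fin n → V)
    (k : Fin n) : swapCoordEquiv s w k = w (s k) := rfl

/-- Permuting the tuple coordinates of a product space. -/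
def prodSwapEquiv (X : Type*) {V : Type*} {n : ℕ} (s : Equiv.Perm (Fin n))
    (hs : ∀ k, s (s k) = k) : (X × (Fin n → V)) ≃ (X × (Fin n → V)) where
  toFun p := (p.1, fun k => p.2 (s k))
  invFun p := (p.1, fun k => p.2 (s k))
  left_inv p := by
    obtain ⟨a, w⟩ := p
    dsimp only
    rw [Prod.mk.injEq]
    exact ⟨rfl, funext fun k => congrArg w (hs k)⟩
  right_inv p := by
    obtain ⟨a, w⟩ := p
    dsimp only
    rw [Prod.mk.injEq]
    exact ⟨rfl, funext fun k => congrArg w (hs k)⟩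

end Helpers

/-- If the encoder/decoder pair `(q, d)` minimizes the objective `L` over all
encoder/decoder pairs and `z_{i-1} ⊥ z_i ∣ (x, z_{≤ i-2})` under the induced joint law for all
`i ∈ {3, …, K}`, then the sequence `a_i = I(x; z_{≤ i})` has non-increasing increments:
`a_i - a_{i-1} ≤ a_{i-1} - a_{i-2}` for every `i ∈ {3, …, K}`. -/
theorem optimal_ordered_autoencoder_concave_information
    {X V : Type*} [Fintype X] [Fintype V] [DecidableEq X] [DecidableEq V]
    (K : ℕ) (pd : X → ℝ) (hpd : IsPMF pd)
    (q : X → (Fin K → V) → ℝ) (hq : IsEncoder q)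
    (d : (i : ℕ) → (Fin i → V) → X → ℝ) (hd : IsDecoder K d)
    (hopt : ∀ (q' : X → (Fin K → V) → ℝ), IsEncoder q' →
      ∀ (d' : (i : ℕ) → (Fin i → V) → X → ℝ), IsDecoder K d' →
        objL K pd q d ≤ objL K pd q' d')
    (hci : ∀ (i : ℕ) (h3 : 3 ≤ i) (hiK : i ≤ K),
      CondIndepRV (joint pd q)
        (fun ω => ω.2 (⟨i - 2, by omega⟩ : Fin K))
        (fun ω => ω.2 (⟨i - 1, by omega⟩ : Fin K))
        (fun ω => (ω.1, trunc (i - 2) (by omega) ω.2))) :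
    ∀ (i : ℕ) (h3 : 3 ≤ i) (hiK : i ≤ K),
      mi (joint pd q) Prod.fst (fun ω => trunc i hiK ω.2) -
          mi (joint pd q) Prod.fst (fun ω => trunc (i - 1) (by omega) ω.2) ≤
        mi (joint pd q) Prod.fst (fun ω => trunc (i - 1) (by omega) ω.2) -
          mi (joint pd q) Prod.fst (fun ω => trunc (i - 2) (by omega) ω.2) := by
  intro i h3 hiK
  have hK : 0 < K := by omega
  have hXne : Nonempty X := by
    rcases isEmpty_or_nonempty X with hE | hne
    · exfalso
      have h1 := hpd.2
      rw [Finset.univ_eq_empty, Finset.sum_empty] at h1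
      norm_num at h1
    · exact hne
  have hμ0 : ∀ ω : X × (Fin K → V), 0 ≤ joint pd q ω := joint_nonneg hpd hq
  have h2K : i - 2 ≤ K := by omega
  have h1K : i - 1 ≤ K := by omega
  have h21K : i - 2 + 1 ≤ K := by omega
  have hu2 : i - 2 < K := by omega
  have hu1 : i - 1 < K := by omega
  have hσσ : ∀ k : Fin K,
      Equiv.swap (⟨i-2, hu2⟩ : Fin K) ⟨i-1, hu1⟩
        (Equiv.swap (⟨i-2, hu2⟩ : Fin K) ⟨i-1, hu1⟩ k) = k :=
    fun k => Equiv.swap_apply_self _ _ k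
  set Φ := prodSwapEquiv X (V := V) (Equiv.swap (⟨i-2, hu2⟩ : Fin K) ⟨i-1, hu1⟩) hσσ with hΦdef
  set q' : X → (Fin K → V) → ℝ :=
    fun a w => q a (fun k => w (Equiv.swap (⟨i-2, hu2⟩ : Fin K) ⟨i-1, hu1⟩ k)) with hq'def
  have hq' : IsEncoder q' := by
    intro a
    refine ⟨fun v => (hq a).1 _, ?_⟩
    rw [← (hq a).2]
    exact Fintype.sum_equiv
      (swapCoordEquiv (Equiv.swap (⟨i-2, hu2⟩ : Fin K) ⟨i-1, hu1⟩)) _ _ (fun w => rfl)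
  have hμ'0 : ∀ ω : X × (Fin K → V), 0 ≤ joint pd q' ω := joint_nonneg hpd hq'
  -- Step 2 : the conditional entropy sums compare
  have hCE : ∑ j : Fin K, condEnt (joint pd q) Prod.fst
        (fun ω : X × (Fin K → V) => trunc (j.1+1) j.isLt ω.2)
      ≤ ∑ j : Fin K, condEnt (joint pd q') Prod.fst
        (fun ω : X × (Fin K → V) => trunc (j.1+1) j.isLt ω.2) := by
    have h1 := objL_ge hpd hq hd
    have h2 := objL_opt (pd := pd) hpd hq'
    have h3' := hopt q' hq' (optDec K pd q') (optDec_isDecoder hpd hq')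
    have h4 := le_trans h1 (le_trans h3' (le_of_eq h2))
    rw [EReal.coe_le_coe_iff] at h4
    have hKinv : (0:ℝ) < 1 / K := by positivity
    exact le_of_mul_le_mul_left h4 hKinv
  -- hence the mutual information sums compare the other way
  have hmiS : ∑ j : Fin K, mi (joint pd q') Prod.fst
        (fun ω : X × (Fin K → V) => trunc (j.1+1) j.isLt ω.2)
      ≤ ∑ j : Fin K, mi (joint pd q) Prod.fst
        (fun ω : X × (Fin K → V) => trunc (j.1+1) j.isLt ω.2) := by
    have hent := ent_joint_fst (pd := pd) hq hq'
    have e1 : ∀ j : Fin K, mi (joint pd q) Prod.fst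
        (fun ω : X × (Fin K → V) => trunc (j.1+1) j.isLt ω.2)
        = ent (joint pd q) Prod.fst - condEnt (joint pd q) Prod.fst
            (fun ω : X × (Fin K → V) => trunc (j.1+1) j.isLt ω.2) :=
      fun j => mi_eq_ent_sub_condEnt hμ0 _ _
    have e2 : ∀ j : Fin K, mi (joint pd q') Prod.fst
        (fun ω : X × (Fin K → V) => trunc (j.1+1) j.isLt ω.2)
        = ent (joint pd q') Prod.fst - condEnt (joint pd q') Prod.fst
            (fun ω : X × (Fin K → V) => trunc (j.1+1) j.isLt ω.2) :=
      fun j => mi_eq_ent_sub_condEnt hμ'0 _ _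
    rw [Finset.sum_congr rfl (fun j _ => e1 j), Finset.sum_congr rfl (fun j _ => e2 j),
      Finset.sum_sub_distrib, Finset.sum_sub_distrib, Finset.sum_const, Finset.sum_const,
      Finset.card_univ]
    rw [hent]
    linarith [hCE]
  -- transport of the truncated mi's through the coordinate swap
  have htrans : ∀ (m : ℕ) (hm : m ≤ K),
      mi (joint pd q') Prod.fst (fun ω : X × (Fin K → V) => trunc m hm ω.2)
      = mi (joint pd q) Prod.fst (fun ω : X × (Fin K → V) =>
          trunc m hm (fun k => ω.2 (Equiv.swap (⟨i-2, hu2⟩ : Fin K) ⟨i-1, hu1⟩ k))) := by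
    intro m hm
    have hj : joint pd q' = fun ω => joint pd q (Φ ω) := rfl
    rw [hj, mi_comp_equiv_domain Φ]
    rfl
  -- the swapped truncations agree with the originals for j ≠ i-2
  have hkey : ∀ j : Fin K, j.1 ≠ i - 2 →
      mi (joint pd q') Prod.fst (fun ω : X × (Fin K → V) => trunc (j.1+1) j.isLt ω.2)
        = mi (joint pd q) Prod.fst (fun ω : X × (Fin K → V) => trunc (j.1+1) j.isLt ω.2) := by
    intro j hj
    rw [htrans (j.1+1) j.isLt]
    rcases lt_or_ge j.1 (i-2) with hlt | hge
    · congr 1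
      funext ω
      funext k
      have hk2 := k.2
      show ω.2 (Equiv.swap (⟨i-2, hu2⟩ : Fin K) ⟨i-1, hu1⟩ (Fin.castLE j.isLt k))
        = ω.2 (Fin.castLE j.isLt k)
      refine congrArg ω.2 (Equiv.swap_apply_of_ne_of_ne ?_ ?_)
      · exact Fin.ne_of_val_ne (by simp only [Fin.coe_castLE]; omega)
      · exact Fin.ne_of_val_ne (by simp only [Fin.coe_castLE]; omega)
    · have hj2 : i - 2 < j.1 + 1 := by omega
      have hj1 : i - 1 < j.1 + 1 := by omega
      have hcomm : ∀ t : Fin (j.1+1),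
          Equiv.swap (⟨i-2, hu2⟩ : Fin K) ⟨i-1, hu1⟩ (Fin.castLE j.isLt t)
          = Fin.castLE j.isLt (Equiv.swap (⟨i-2, hj2⟩ : Fin (j.1+1)) ⟨i-1, hj1⟩ t) := by
        intro t
        by_cases ht2 : t.1 = i - 2
        · have e1 : t = (⟨i-2, hj2⟩ : Fin (j.1+1)) := Fin.ext ht2
          rw [e1, Equiv.swap_apply_left]
          have e2 : Fin.castLE j.isLt (⟨i-2, hj2⟩ : Fin (j.1+1)) = (⟨i-2, hu2⟩ : Fin K) :=
            Fin.ext rfl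
          rw [e2, Equiv.swap_apply_left]
          exact Fin.ext rfl
        · by_cases ht1 : t.1 = i - 1
          · have e1 : t = (⟨i-1, hj1⟩ : Fin (j.1+1)) := Fin.ext ht1
            rw [e1, Equiv.swap_apply_right]
            have e2 : Fin.castLE j.isLt (⟨i-1, hj1⟩ : Fin (j.1+1)) = (⟨i-1, hu1⟩ : Fin K) :=
              Fin.ext rfl
            rw [e2, Equiv.swap_apply_right]
            exact Fin.ext rfl
          · rw [Equiv.swap_apply_of_ne_of_ne
                (Fin.ne_of_val_ne (by simp only [Fin.coe_castLE]; omega))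
                (Fin.ne_of_val_ne (by simp only [Fin.coe_castLE]; omega)),
              Equiv.swap_apply_of_ne_of_ne
                (Fin.ne_of_val_ne ht2) (Fin.ne_of_val_ne ht1)]
      have hfun : (fun ω : X × (Fin K → V) =>
            trunc (j.1+1) j.isLt (fun k => ω.2 (Equiv.swap (⟨i-2, hu2⟩ : Fin K) ⟨i-1, hu1⟩ k)))
          = fun ω => swapCoordEquiv (Equiv.swap (⟨i-2, hj2⟩ : Fin (j.1+1)) ⟨i-1, hj1⟩)
              (trunc (j.1+1) j.isLt ω.2) := by
        funext ω
        funext t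
        exact congrArg ω.2 (hcomm t)
      rw [hfun, mi_comp_right (swapCoordEquiv _).injective]
  -- the swapped truncation at length i-1 gives b
  have hkey2 : mi (joint pd q') Prod.fst
        (fun ω : X × (Fin K → V) => trunc (i-2+1) h21K ω.2)
      = mi (joint pd q) Prod.fst
          (fun ω : X × (Fin K → V) => (ω.2 ⟨i-1, hu1⟩, trunc (i-2) h2K ω.2)) := by
    rw [htrans (i-2+1) h21K]
    have hfun : (fun ω : X × (Fin K → V) =>
          trunc (i-2+1) h21K (fun k => ω.2 (Equiv.swap (⟨i-2, hu2⟩ : Fin K) ⟨i-1, hu1⟩ k)))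
        = fun ω => insEquiv V (i-2) (i-2+1) rfl (ω.2 ⟨i-1, hu1⟩, trunc (i-2) h2K ω.2) := by
      funext ω
      funext k
      have hk2 := k.2
      rw [insEquiv_apply]
      by_cases hk : k.1 < i - 2
      · rw [dif_pos hk]
        refine congrArg ω.2 ?_
        rw [Equiv.swap_apply_of_ne_of_ne
          (Fin.ne_of_val_ne (by simp only [Fin.coe_castLE]; omega))
          (Fin.ne_of_val_ne (by simp only [Fin.coe_castLE]; omega))]
        exact Fin.ext rfl
      · rw [dif_neg hk]
        refine congrArg ω.2 ?_
        have e1 : Fin.castLE h21K k = (⟨i-2, hu2⟩ : Fin K) :=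
          Fin.ext (by simp only [Fin.coe_castLE]; omega)
        rw [e1, Equiv.swap_apply_left]
    rw [hfun, mi_comp_right (insEquiv V (i-2) (i-2+1) rfl).injective]
  -- optimality: b ≤ a_{i-1}
  have hb_le : mi (joint pd q) Prod.fst
        (fun ω : X × (Fin K → V) => (ω.2 ⟨i-1, hu1⟩, trunc (i-2) h2K ω.2))
      ≤ mi (joint pd q) Prod.fst (fun ω : X × (Fin K → V) => trunc (i-1) h1K ω.2) := by
    have hsum : ∑ j : Fin K,
        (mi (joint pd q) Prod.fst (fun ω : X × (Fin K → V) => trunc (j.1+1) j.isLt ω.2)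
          - mi (joint pd q') Prod.fst (fun ω : X × (Fin K → V) => trunc (j.1+1) j.isLt ω.2))
        = mi (joint pd q) Prod.fst
            (fun ω : X × (Fin K → V) => trunc ((⟨i-2, hu2⟩ : Fin K).1+1) (⟨i-2, hu2⟩ : Fin K).isLt ω.2)
          - mi (joint pd q') Prod.fst
            (fun ω : X × (Fin K → V) => trunc ((⟨i-2, hu2⟩ : Fin K).1+1) (⟨i-2, hu2⟩ : Fin K).isLt ω.2) := by
      refine Finset.sum_eq_single_of_mem _ (Finset.mem_univ (⟨i-2, hu2⟩ : Fin K)) ?_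
      intro j _ hne
      rw [hkey j (fun h => hne (Fin.ext h))]
      ring
    have h0 : (0:ℝ) ≤ ∑ j : Fin K,
        (mi (joint pd q) Prod.fst (fun ω : X × (Fin K → V) => trunc (j.1+1) j.isLt ω.2)
          - mi (joint pd q') Prod.fst (fun ω : X × (Fin K → V) => trunc (j.1+1) j.isLt ω.2)) := by
      rw [Finset.sum_sub_distrib]
      linarith [hmiS]
    rw [hsum] at h0
    have h0' : (0:ℝ) ≤ mi (joint pd q) Prod.fst
          (fun ω : X × (Fin K → V) => trunc (i-2+1) h21K ω.2)
        - mi (joint pd q') Prod.fst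
          (fun ω : X × (Fin K → V) => trunc (i-2+1) h21K ω.2) := h0
    have hrec : mi (joint pd q) Prod.fst
          (fun ω : X × (Fin K → V) => trunc (i-2+1) h21K ω.2)
        = mi (joint pd q) Prod.fst (fun ω : X × (Fin K → V) => trunc (i-1) h1K ω.2) :=
      mi_trunc_congr (joint pd q) (by omega) h1K h21K
    linarith [hkey2, hrec, h0']
  -- chain rule decompositions
  have idA : (fun ω : X × (Fin K → V) => trunc i hiK ω.2)
      = fun ω => insEquiv V (i-1) i (by omega) (ω.2 ⟨i-1, hu1⟩, trunc (i-1) h1K ω.2) := by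
    funext ω
    funext k
    have hk2 := k.2
    rw [insEquiv_apply]
    by_cases hk : k.1 < i - 1
    · rw [dif_pos hk]
      exact congrArg ω.2 (Fin.ext rfl)
    · rw [dif_neg hk]
      exact congrArg ω.2 (Fin.ext (by simp only [Fin.coe_castLE]; omega))
  have idB : (fun ω : X × (Fin K → V) => trunc (i-1) h1K ω.2)
      = fun ω => insEquiv V (i-2) (i-1) (by omega) (ω.2 ⟨i-2, hu2⟩, trunc (i-2) h2K ω.2) := by
    funext ω
    funext k
    have hk2 := k.2
    rw [insEquiv_apply]
    by_cases hk : k.1 < i - 2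
    · rw [dif_pos hk]
      exact congrArg ω.2 (Fin.ext rfl)
    · rw [dif_neg hk]
      exact congrArg ω.2 (Fin.ext (by simp only [Fin.coe_castLE]; omega))
  have hA : mi (joint pd q) Prod.fst (fun ω : X × (Fin K → V) => trunc i hiK ω.2)
      = mi (joint pd q) Prod.fst (fun ω : X × (Fin K → V) => trunc (i-1) h1K ω.2)
        + cmi (joint pd q) Prod.fst (fun ω : X × (Fin K → V) => ω.2 ⟨i-1, hu1⟩)
            (fun ω : X × (Fin K → V) => trunc (i-1) h1K ω.2) := by
    rw [idA, mi_comp_right (insEquiv V (i-1) i (by omega)).injective, mi_chain hμ0]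
  have hB : mi (joint pd q) Prod.fst (fun ω : X × (Fin K → V) => trunc (i-1) h1K ω.2)
      = mi (joint pd q) Prod.fst (fun ω : X × (Fin K → V) => trunc (i-2) h2K ω.2)
        + cmi (joint pd q) Prod.fst (fun ω : X × (Fin K → V) => ω.2 ⟨i-2, hu2⟩)
            (fun ω : X × (Fin K → V) => trunc (i-2) h2K ω.2) := by
    rw [idB, mi_comp_right (insEquiv V (i-2) (i-1) (by omega)).injective, mi_chain hμ0]
  have hBb : mi (joint pd q) Prod.fst
        (fun ω : X × (Fin K → V) => (ω.2 ⟨i-1, hu1⟩, trunc (i-2) h2K ω.2))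
      = mi (joint pd q) Prod.fst (fun ω : X × (Fin K → V) => trunc (i-2) h2K ω.2)
        + cmi (joint pd q) Prod.fst (fun ω : X × (Fin K → V) => ω.2 ⟨i-1, hu1⟩)
            (fun ω : X × (Fin K → V) => trunc (i-2) h2K ω.2) :=
    mi_chain hμ0 _ _ _
  have hC : cmi (joint pd q) Prod.fst (fun ω : X × (Fin K → V) => ω.2 ⟨i-1, hu1⟩)
        (fun ω : X × (Fin K → V) => trunc (i-1) h1K ω.2)
      = cmi (joint pd q) Prod.fst (fun ω : X × (Fin K → V) => ω.2 ⟨i-1, hu1⟩)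
          (fun ω : X × (Fin K → V) => (ω.2 ⟨i-2, hu2⟩, trunc (i-2) h2K ω.2)) := by
    rw [idB, cmi_comp_third (insEquiv V (i-2) (i-1) (by omega)).injective]
  have hzero : cmi (joint pd q) (fun ω : X × (Fin K → V) => ω.2 ⟨i-2, hu2⟩)
        (fun ω : X × (Fin K → V) => ω.2 ⟨i-1, hu1⟩)
        (fun ω : X × (Fin K → V) => (Prod.fst ω, trunc (i-2) h2K ω.2)) = 0 :=
    cmi_eq_zero_of_condIndep hμ0 (hci i h3 hiK)
  have hpos : 0 ≤ cmi (joint pd q) (fun ω : X × (Fin K → V) => ω.2 ⟨i-2, hu2⟩)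
        (fun ω : X × (Fin K → V) => ω.2 ⟨i-1, hu1⟩)
        (fun ω : X × (Fin K → V) => trunc (i-2) h2K ω.2) :=
    cmi_nonneg hμ0 _ _ _
  have hex := cmi_exchange hμ0 (Prod.fst : X × (Fin K → V) → X)
    (fun ω : X × (Fin K → V) => ω.2 ⟨i-2, hu2⟩)
    (fun ω : X × (Fin K → V) => ω.2 ⟨i-1, hu1⟩)
    (fun ω : X × (Fin K → V) => trunc (i-2) h2K ω.2)
  show mi (joint pd q) Prod.fst (fun ω : X × (Fin K → V) => trunc i hiK ω.2)
      - mi (joint pd q) Prod.fst (fun ω : X × (Fin K → V) => trunc (i-1) h1K ω.2)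
    ≤ mi (joint pd q) Prod.fst (fun ω : X × (Fin K → V) => trunc (i-1) h1K ω.2)
      - mi (joint pd q) Prod.fst (fun ω : X × (Fin K → V) => trunc (i-2) h2K ω.2)
  linarith [hA, hB, hBb, hC, hzero, hpos, hex, hb_le]
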